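/- In a structured Haar scattering of depth j on d = 2^j_max vertices, the coefficient S_j x(n,q) has order m (i.e., is computed with exactly m absolute values) if and only if q = Σ_{k=1}^m 2^{j−j_k} for some 0 ≤ j_1 < … < j_m < j, with q = 0 corresponding to order 0. Consequently the number of order-m coefficients in S_j x equals C(j,m) · 2^{−j} d. -/
import Mathlib


/-- The order (number of absolute values) of the structured Haar scattering
coefficient with frequency index `q` at depth `j`, defined by the recursion
`ord(0,·) = 0`, `ord(j+1, 2q) = ord(j, q)`, `ord(j+1, 2q+1) = ord(j, q) + 1`. -/
def scatOrder : ℕ → ℕ → ℕ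
  | 0, _ => 0
  | (j + 1), q => if q % 2 = 0 then scatOrder j (q / 2) else scatOrder j (q / 2) + 1

lemma scatOrder_eq_length (j : ℕ) : ∀ q < 2 ^ j, scatOrder j q = q.bitIndices.length := by
  induction j with
  | zero => intro q hq; interval_cases q; simp [scatOrder]
  | succ j ih =>
    intro q hq
    rcases Nat.even_or_odd q with ⟨r, hr⟩ | ⟨r, hr⟩
    · subst hr
      rw [scatOrder, if_pos (by omega), show (r + r) / 2 = r by omega, ih r (by omega)]
      rw [show r + r = 2 * r by ring, Nat.bitIndices_two_mul]
      simp
    · subst hr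
      rw [scatOrder, if_neg (by omega), show (2 * r + 1) / 2 = r by omega, ih r (by omega),
        Nat.bitIndices_two_mul_add_one]
      simp

lemma sum_lt_pow {j : ℕ} {t : Finset ℕ} (ht : t ⊆ Finset.range j) :
    ∑ i ∈ t, 2 ^ i < 2 ^ j :=
  Nat.geomSum_lt le_rfl fun k hk => Finset.mem_range.mp (ht hk)

lemma scatOrder_sum {j : ℕ} {t : Finset ℕ} (ht : t ⊆ Finset.range j) :
    scatOrder j (∑ i ∈ t, 2 ^ i) = t.card := by
  rw [scatOrder_eq_length j _ (sum_lt_pow ht)]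
  have h1 : (∑ i ∈ t, 2 ^ i).bitIndices.toFinset = t := Finset.toFinset_bitIndices_twoPowSum t
  have h2 := List.toFinset_card_of_nodup (Nat.bitIndices_sorted (n := ∑ i ∈ t, 2 ^ i)).nodup
  rw [h1] at h2
  omega

/-- Finset form of the characterization. -/
lemma scat_iff_finset {j q m : ℕ} (hq : q < 2 ^ j) :
    scatOrder j q = m ↔
      ∃ t : Finset ℕ, t ⊆ Finset.range j ∧ t.card = m ∧ q = ∑ i ∈ t, 2 ^ i := by
  constructor
  · intro h
    refine ⟨q.bitIndices.toFinset, ?_, ?_, ?_⟩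
    · intro a ha
      simp only [List.mem_toFinset] at ha
      have := Nat.two_pow_le_of_mem_bitIndices ha
      have : 2 ^ a < 2 ^ j := lt_of_le_of_lt this hq
      exact Finset.mem_range.mpr (Nat.pow_lt_pow_iff_right (le_refl 2) |>.mp this)
    · rw [List.toFinset_card_of_nodup Nat.bitIndices_sorted.nodup, ← scatOrder_eq_length j q hq, h]
    · exact (Finset.twoPowSum_toFinset_bitIndices q).symm
  · rintro ⟨t, hts, htc, rfl⟩
    rw [scatOrder_sum hts, htc]

/-- In a structured Haar scattering of depth `j` on `d = 2^jmax` vertices, the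
coefficient `S_j x(n,q)` has order `m` iff `q = Σ_{k=1}^m 2^{j−j_k}` for some
strictly increasing exponents `1 ≤ j_1 < … < j_m ≤ j` (with `q = 0` of order 0);
consequently the number of order-`m` coefficients in `S_j x` is
`C(j,m) · 2^{−j} d = C(j,m) · 2^{jmax−j}`. -/
theorem scatOrder_iff_card (jmax j m : ℕ) (hj : j ≤ jmax) :
    (∀ q < 2 ^ j, (scatOrder j q = m ↔
        ∃ s : Fin m → ℕ, StrictMono s ∧ (∀ k, 1 ≤ s k ∧ s k ≤ j) ∧
          q = ∑ k, 2 ^ (j - s k))) ∧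
    ((Finset.range (2 ^ j)).filter (fun q => scatOrder j q = m)).card * 2 ^ (jmax - j) =
      Nat.choose j m * 2 ^ (jmax - j) := by
  constructor
  · intro q hq
    rw [scat_iff_finset hq]
    constructor
    · rintro ⟨t, hts, htc, rfl⟩
      have hlt : ∀ k : Fin m, t.orderEmbOfFin htc k < j := fun k =>
        Finset.mem_range.mp (hts (t.orderEmbOfFin_mem htc k))
      refine ⟨fun k => j - t.orderEmbOfFin htc k.rev, ?_, ?_, ?_⟩
      · intro k l hkl
        have h1 : t.orderEmbOfFin htc l.rev < t.orderEmbOfFin htc k.rev :=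
          (t.orderEmbOfFin htc).strictMono (Fin.rev_lt_rev.mpr hkl)
        have := hlt k.rev
        dsimp only
        omega
      · intro k; have := hlt k.rev; dsimp only; omega
      · show ∑ i ∈ t, 2 ^ i = ∑ k : Fin m, 2 ^ (j - (j - t.orderEmbOfFin htc k.rev))
        calc ∑ i ∈ t, 2 ^ i
            = ∑ i : t, 2 ^ (i : ℕ) := (Finset.sum_coe_sort t _).symm
          _ = ∑ k : Fin m, 2 ^ ((t.orderIsoOfFin htc k : ℕ)) :=
              (Equiv.sum_comp (t.orderIsoOfFin htc).toEquiv (fun i : t => 2 ^ (i : ℕ))).symm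
          _ = ∑ k : Fin m, 2 ^ (t.orderEmbOfFin htc k) := by
              simp [Finset.coe_orderIsoOfFin_apply]
          _ = ∑ k : Fin m, 2 ^ (t.orderEmbOfFin htc k.rev) :=
              Fintype.sum_bijective Fin.rev Fin.rev_bijective _ _ (fun k => by
                simp [Fin.rev_rev])
          _ = ∑ k : Fin m, 2 ^ (j - (j - t.orderEmbOfFin htc k.rev)) :=
              Finset.sum_congr rfl fun k _ => by have := hlt k.rev; congr 1; omega
    · rintro ⟨s, hsm, hsb, rfl⟩
      refine ⟨Finset.image (fun k => j - s k) Finset.univ, ?_, ?_, ?_⟩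
      · intro a ha
        simp only [Finset.mem_image] at ha
        obtain ⟨k, _, rfl⟩ := ha
        have := hsb k
        exact Finset.mem_range.mpr (by omega)
      · rw [Finset.card_image_of_injOn, Finset.card_univ, Fintype.card_fin]
        intro k _ l _ h
        try dsimp only at h
        have h1 := hsb k; have h2 := hsb l
        exact hsm.injective (by omega)
      · rw [Finset.sum_image]
        intro k _ l _ h
        try dsimp only at h
        have h1 := hsb k; have h2 := hsb l
        exact hsm.injective (by omega)
  · congr 1
    have himg : (Finset.range (2 ^ j)).filter (fun q => scatOrder j q = m) =
        ((Finset.range j).powersetCard m).image (fun t => ∑ i ∈ t, 2 ^ i) := by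
      ext q
      simp only [Finset.mem_filter, Finset.mem_range, Finset.mem_image,
        Finset.mem_powersetCard]
      constructor
      · rintro ⟨hq, hm⟩
        obtain ⟨t, h1, h2, h3⟩ := (scat_iff_finset hq).mp hm
        exact ⟨t, ⟨h1, h2⟩, h3.symm⟩
      · rintro ⟨t, ⟨h1, h2⟩, rfl⟩
        exact ⟨sum_lt_pow h1, by rw [scatOrder_sum h1, h2]⟩
    rw [himg, Finset.card_image_of_injOn ((Finset.geomSum_injective le_rfl).injOn),
      Finset.card_powersetCard, Finset.card_range]
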